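/- Let q = 2^m with m odd and m > 3. For pairwise distinct x_1, x_2, x_3, x_4 in F_q^*, the 4×4 determinant of the matrix with rows (1,1,1,1), (x_1,x_2,x_3,x_4), (x_1^3,x_2^3,x_3^3,x_4^3), (x_1^4,x_2^4,x_3^4,x_4^4) vanishes if and only if x_1x_2 + x_1x_3 + x_2x_3 + (x_1+x_2+x_3)x_4 = 0. -/

import Mathlib

theorem stmt11 (m : ℕ) (hm : 3 < m) (hmo : Odd m)
    (F : Type*) [Field F] [Fintype F] (hF : Fintype.card F = 2 ^ m)
    (x₁ x₂ x₃ x₄ : F)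
    (h0 : x₁ ≠ 0 ∧ x₂ ≠ 0 ∧ x₃ ≠ 0 ∧ x₄ ≠ 0)
    (hd : x₁ ≠ x₂ ∧ x₁ ≠ x₃ ∧ x₁ ≠ x₄ ∧ x₂ ≠ x₃ ∧ x₂ ≠ x₄ ∧ x₃ ≠ x₄) :
    Matrix.det !![1, 1, 1, 1;
                  x₁, x₂, x₃, x₄;
                  x₁^3, x₂^3, x₃^3, x₄^3;
                  x₁^4, x₂^4, x₃^4, x₄^4] = 0 ↔
    x₁ * x₂ + x₁ * x₃ + x₂ * x₃ + (x₁ + x₂ + x₃) * x₄ = 0 := by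
  obtain ⟨h12, h13, h14, h23, h24, h34⟩ := hd
  have key : Matrix.det !![1, 1, 1, 1;
                  x₁, x₂, x₃, x₄;
                  x₁^3, x₂^3, x₃^3, x₄^3;
                  x₁^4, x₂^4, x₃^4, x₄^4] =
      ((x₂ - x₁) * (x₃ - x₁) * (x₄ - x₁) * (x₃ - x₂) * (x₄ - x₂) * (x₄ - x₃)) *
      (x₁ * x₂ + x₁ * x₃ + x₂ * x₃ + (x₁ + x₂ + x₃) * x₄) := by
    simp [Matrix.det_succ_row_zero, Fin.sum_univ_succ, Fin.succAbove, Fin.castSucc, Fin.castAdd, Fin.castLE]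
    ring
  rw [key, mul_eq_zero]
  constructor
  · rintro (h | h)
    · exfalso
      simp only [mul_eq_zero, sub_eq_zero] at h
      rcases h with ((((h|h)|h)|h)|h)|h <;> simp_all [eq_comm]
    · exact h
  · intro h; right; exact h
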